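/- Multiplicative homological perturbation lemma, inclusion part: the perturbed inclusion i' := Σ' ∘ i is a unital algebra homomorphism from N to M: i'(1) = 1 and i'(ab) = i'(a)·i'(b) for all a, b in N. -/

import Mathlib

private theorem hpl_pow_shift {G : Type*} [Monoid G] (a b : G) (n : ℕ) :
    (a * b) ^ (n + 1) = a * (b * a) ^ n * b := by
  induction n with
  | zero => simp
  | succ n ih => rw [pow_succ, ih, pow_succ]; simp [mul_assoc]

private theorem hpl_key
    {R : Type*} [CommRing R] {M N : Type*}
    [Ring M] [Algebra R M] [Ring N] [Algebra R N]
    (𝒜 : ℤ → Submodule R M) (ℬ : ℤ → Submodule R N)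
    [GradedAlgebra 𝒜] [GradedAlgebra ℬ]
    (i : N →ₗ[R] M) (p : M →ₗ[R] N) (h : M →ₗ[R] M)
    (hpi : p ∘ₗ i = LinearMap.id)
    (hhh : h ∘ₗ h = 0) (hhi : h ∘ₗ i = 0) (hph : p ∘ₗ h = 0)
    (x : M →ₗ[R] M)
    (K : ℕ) (hK : (x ∘ₗ h) ^ K = 0)
    (hxdeg : ∀ (n : ℤ), ∀ a ∈ 𝒜 n, x a ∈ 𝒜 (n + 1))
    (hxder : ∀ (n : ℤ), ∀ a ∈ 𝒜 n, ∀ b : M,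
      x (a * b) = x a * b + (((-1 : ℤˣ) ^ n : ℤˣ) : ℤ) • (a * x b))
    (hione : i 1 = 1) (himul : ∀ a b : N, i (a * b) = i a * i b)
    (hideg : ∀ (n : ℤ), ∀ a ∈ ℬ n, i a ∈ 𝒜 n)
    (hhdeg : ∀ (n : ℤ), ∀ a ∈ 𝒜 n, h a ∈ 𝒜 (n - 1))
    (hhder : ∀ (n : ℤ), ∀ a ∈ 𝒜 n, ∀ b : M,
      h (a * b) = h a * i (p b) + (((-1 : ℤˣ) ^ n : ℤˣ) : ℤ) • (a * h b))
    (S' : M →ₗ[R] M) (hS' : S' = ∑ k ∈ Finset.range (K + 1), (h ∘ₗ x) ^ k) :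
    (S' ∘ₗ i) 1 = 1 ∧ ∀ a b : N, (S' ∘ₗ i) (a * b) = (S' ∘ₗ i) a * (S' ∘ₗ i) b := by
  subst hS'
  set τ : M →ₗ[R] M := h ∘ₗ x with hτ
  set S' : M →ₗ[R] M := ∑ k ∈ Finset.range (K + 1), τ ^ k with hS'
  set I : N →ₗ[R] M := S' ∘ₗ i with hIdef
  -- nilpotency of τ
  have hτnil : τ ^ (K + 1) = 0 := by
    have e : τ ^ (K + 1) = h * (x * h) ^ K * x := hpl_pow_shift h x K
    rw [e]
    have : (x * h : M →ₗ[R] M) ^ K = 0 := by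
      simpa [Module.End.mul_eq_comp] using hK
    rw [this, mul_zero, zero_mul]
  -- injectivity of 1 - τ
  have ez : ∀ u : M, S' (u - τ u) = u := by
    intro u
    have hgs := geom_sum_mul τ (K + 1)
    rw [hτnil] at hgs
    have e2 := LinearMap.ext_iff.mp hgs u
    simp only [Module.End.mul_apply, LinearMap.sub_apply, Module.End.one_apply,
      LinearMap.zero_apply, zero_sub, LinearMap.neg_apply] at e2
    have h2 : S' (u - τ u) = -S' (τ u - u) := by rw [← map_neg, neg_sub]
    rw [h2, e2, neg_neg]
  have hinj : ∀ z w : M, z - τ z = w - τ w → z = w := by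
    intro z w hzw
    have := ez z
    rw [hzw, ez w] at this
    exact this.symm
  -- fixed point equation
  have hfix : ∀ z : N, τ (I z) = I z - i z := by
    intro z
    have hms := mul_geom_sum τ (K + 1)
    rw [hτnil] at hms
    have e2 := LinearMap.ext_iff.mp hms (i z)
    simp only [Module.End.mul_apply, LinearMap.sub_apply, Module.End.one_apply,
      LinearMap.zero_apply, zero_sub, LinearMap.neg_apply] at e2
    have hIz : I z = S' (i z) := rfl
    rw [hIz]
    -- e2 : τ (S' (i z)) - S' (i z) = -(i z)
    calc τ (S' (i z)) = (τ (S' (i z)) - S' (i z)) + S' (i z) := by abel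
      _ = -(i z) + S' (i z) := by rw [e2]
      _ = S' (i z) - i z := by abel
  -- I z as a sum
  have hIsum : ∀ z : N, I z = ∑ k ∈ Finset.range (K + 1), (τ ^ k) (i z) := by
    intro z
    simp [hIdef, hS', LinearMap.sum_apply]
  -- h ∘ I = 0
  have hI0 : ∀ z : N, h (I z) = 0 := by
    intro z
    rw [hIsum z, map_sum]
    refine Finset.sum_eq_zero fun k _ => ?_
    match k with
    | 0 =>
      simpa using LinearMap.ext_iff.mp hhi z
    | k + 1 =>
      have : (τ ^ (k + 1)) (i z) = h (x ((τ ^ k) (i z))) := by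
        rw [pow_succ']; rfl
      rw [this]
      simpa using LinearMap.ext_iff.mp hhh (x ((τ ^ k) (i z)))
  -- p ∘ I = id
  have hpI : ∀ z : N, p (I z) = z := by
    intro z
    rw [hIsum z, map_sum]
    rw [Finset.sum_eq_single_of_mem 0 (by simp)]
    · simpa using LinearMap.ext_iff.mp hpi z
    · intro k _ hk
      match k with
      | 0 => exact absurd rfl hk
      | k + 1 =>
        have : (τ ^ (k + 1)) (i z) = h (x ((τ ^ k) (i z))) := by
          rw [pow_succ']; rfl
        rw [this]
        simpa using LinearMap.ext_iff.mp hph (x ((τ ^ k) (i z)))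
  -- I preserves degree
  have hτdeg : ∀ (n : ℤ) (k : ℕ), ∀ w ∈ 𝒜 n, (τ ^ k) w ∈ 𝒜 n := by
    intro n k
    induction k with
    | zero => intro w hw; simpa using hw
    | succ k ih =>
      intro w hw
      have e : (τ ^ (k + 1)) w = τ ((τ ^ k) w) := by rw [pow_succ']; rfl
      rw [e]
      have := hhdeg (n + 1) (x ((τ ^ k) w)) (hxdeg n _ (ih w hw))
      have e' : (n + 1 - 1 : ℤ) = n := by ring
      rw [e'] at this
      exact this
  have hIdeg : ∀ (n : ℤ), ∀ a ∈ ℬ n, I a ∈ 𝒜 n := by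
    intro n a ha
    rw [hIsum a]
    exact Submodule.sum_mem _ fun k _ => hτdeg n k _ (hideg n a ha)
  -- x kills 1
  have hx1 : x 1 = 0 := by
    have e := hxder 0 1 (SetLike.one_mem_graded 𝒜) 1
    simp only [one_mul, mul_one, zpow_zero, Units.val_one, one_smul] at e
    simpa using e
  constructor
  · -- unitality
    have h1 : (1 : M) - τ 1 = 1 := by
      have : τ (1 : M) = 0 := by
        show h (x 1) = 0
        rw [hx1, map_zero]
      rw [this, sub_zero]
    refine hinj _ _ ?_
    show I 1 - τ (I 1) = 1 - τ 1
    rw [hfix 1, h1, hione]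
    abel
  · -- multiplicativity on homogeneous elements
    have main : ∀ (m : ℤ), ∀ a ∈ ℬ m, ∀ b : N, I (a * b) = I a * I b := by
      intro m a ha b
      set u : M := I a with hu'
      set v : M := I b with hv'
      have hu : u ∈ 𝒜 m := hIdeg m a ha
      set ε : ℤ := (((-1 : ℤˣ) ^ m : ℤˣ) : ℤ) with hε
      have hεε : ε * ε = 1 := by
        rw [hε, ← Units.val_mul, Int.units_mul_self, Units.val_one]
      refine hinj _ _ ?_
      have lhs : I (a * b) - τ (I (a * b)) = i (a * b) := by
        rw [hfix (a * b)]; abel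
      rw [lhs]
      -- compute τ (u * v)
      have e1 : x (u * v) = x u * v + ε • (u * x v) := hxder m u hu v
      have hτuv : τ (u * v) = h (x (u * v)) := rfl
      have e2 : h (x u * v)
          = h (x u) * i (p v) + ((((-1 : ℤˣ) ^ (m + 1) : ℤˣ)) : ℤ) • (x u * h v) :=
        hhder (m + 1) (x u) (hxdeg m u hu) v
      have e3 : h (u * x v) = h u * i (p (x v)) + ε • (u * h (x v)) := hhder m u hu (x v)
      have hv0 : h v = 0 := hI0 b
      have hu0 : h u = 0 := hI0 a
      have hipv : i (p v) = i b := by rw [hv', hpI b]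
      have hhxu : h (x u) = u - i a := by
        have := hfix a
        rw [← hu'] at this
        exact this
      have hhxv : h (x v) = v - i b := by
        have := hfix b
        rw [← hv'] at this
        exact this
      have eτ : τ (u * v) = (u - i a) * i b + u * (v - i b) := by
        rw [hτuv, e1, map_add, map_zsmul h, e2, e3, hv0, hu0, hipv, hhxu, hhxv]
        rw [mul_zero, smul_zero, add_zero, zero_mul, zero_add]
        rw [smul_smul, hεε, one_smul]
      rw [eτ, himul a b]
      noncomm_ring
    intro a b
    refine DirectSum.Decomposition.inductionOn ℬ (motive := fun a => ∀ b : N, I (a * b) = I a * I b)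
      ?_ ?_ ?_ a b
    · intro b; simp
    · intro n c b
      exact main n (c : N) c.2 b
    · intro a₁ a₂ h1 h2 b
      simp only [add_mul, map_add, h1 b, h2 b]


theorem multiplicative_hpl_inclusion
    {R : Type*} [CommRing R] {M N : Type*}
    [Ring M] [Algebra R M] [Ring N] [Algebra R N]
    (𝒜 : ℤ → Submodule R M) (ℬ : ℤ → Submodule R N)
    [GradedAlgebra 𝒜] [GradedAlgebra ℬ]
    (dM : M →ₗ[R] M) (dN : N →ₗ[R] N)
    (hdM : dM ∘ₗ dM = 0) (hdN : dN ∘ₗ dN = 0)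
    (i : N →ₗ[R] M) (p : M →ₗ[R] N) (h : M →ₗ[R] M)
    (hdi : dM ∘ₗ i = i ∘ₗ dN) (hpd : p ∘ₗ dM = dN ∘ₗ p)
    (hpi : p ∘ₗ i = LinearMap.id)
    (hhtp : LinearMap.id - i ∘ₗ p = dM ∘ₗ h + h ∘ₗ dM)
    (hhh : h ∘ₗ h = 0) (hhi : h ∘ₗ i = 0) (hph : p ∘ₗ h = 0)
    (x : M →ₗ[R] M) (hx : (dM + x) ∘ₗ (dM + x) = 0)
    (K : ℕ) (hK : (x ∘ₗ h) ^ K = 0)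
    -- `d_M`, `d_N` and `x` are homogeneous of degree `+1` and graded derivations
    (hdMdeg : ∀ (n : ℤ), ∀ a ∈ 𝒜 n, dM a ∈ 𝒜 (n + 1))
    (hdMder : ∀ (n : ℤ), ∀ a ∈ 𝒜 n, ∀ b : M,
      dM (a * b) = dM a * b + (((-1 : ℤˣ) ^ n : ℤˣ) : ℤ) • (a * dM b))
    (hdNdeg : ∀ (n : ℤ), ∀ a ∈ ℬ n, dN a ∈ ℬ (n + 1))
    (hdNder : ∀ (n : ℤ), ∀ a ∈ ℬ n, ∀ b : N,
      dN (a * b) = dN a * b + (((-1 : ℤˣ) ^ n : ℤˣ) : ℤ) • (a * dN b))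
    (hxdeg : ∀ (n : ℤ), ∀ a ∈ 𝒜 n, x a ∈ 𝒜 (n + 1))
    (hxder : ∀ (n : ℤ), ∀ a ∈ 𝒜 n, ∀ b : M,
      x (a * b) = x a * b + (((-1 : ℤˣ) ^ n : ℤˣ) : ℤ) • (a * x b))
    -- `i` and `p` are degree-0 unital algebra homomorphisms
    (hione : i 1 = 1) (himul : ∀ a b : N, i (a * b) = i a * i b)
    (hideg : ∀ (n : ℤ), ∀ a ∈ ℬ n, i a ∈ 𝒜 n)
    (hpone : p 1 = 1) (hpmul : ∀ a b : M, p (a * b) = p a * p b)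
    (hpdeg : ∀ (n : ℤ), ∀ a ∈ 𝒜 n, p a ∈ ℬ n)
    -- `h` is homogeneous of degree `-1` and an `(i∘p, id)`-derivation
    (hhdeg : ∀ (n : ℤ), ∀ a ∈ 𝒜 n, h a ∈ 𝒜 (n - 1))
    (hhder : ∀ (n : ℤ), ∀ a ∈ 𝒜 n, ∀ b : M,
      h (a * b) = h a * i (p b) + (((-1 : ℤˣ) ^ n : ℤˣ) : ℤ) • (a * h b)) :
    let S : M →ₗ[R] M := ∑ k ∈ Finset.range K, (x ∘ₗ h) ^ k
    let S' : M →ₗ[R] M := ∑ k ∈ Finset.range (K + 1), (h ∘ₗ x) ^ k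
    let i' : N →ₗ[R] M := S' ∘ₗ i
    let p' : M →ₗ[R] N := p ∘ₗ S
    let h' : M →ₗ[R] M := h ∘ₗ S
    let dN' : N →ₗ[R] N := dN + p ∘ₗ S ∘ₗ x ∘ₗ i
    i' 1 = 1 ∧ ∀ a b : N, i' (a * b) = i' a * i' b := by
  intro S S' i' p' h' dN'
  exact hpl_key 𝒜 ℬ i p h hpi hhh hhi hph x K hK hxdeg hxder hione himul hideg hhdeg hhder
    S' rfl
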